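/- Let m1, m2 ≥ 1 and let W ⊆ GL₄(ℂ) be the (finite) subgroup generated by the matrices s_p (1 ≤ p ≤ m1) and t_q (1 ≤ q ≤ m2). In the ℂ-algebra (MonoidAlgebra ℂ W) ⊗ 𝒞, define for x ∈ ℂ⁴ the element O(x) := Σ_{p=1}^{m1} κ_{α_p}·B(x,α_p)·(s_p ⊗ ι(α_p)) + Σ_{q=1}^{m2} κ_{β_q}·B(x,β_q)·(t_q ⊗ ι(β_q)), where B(x,y) = Σ_j x_j y_j. Then for every x in the span of the first two standard basis vectors and every y in the span of the last two standard basis vectors, O(x)·O(y) + O(y)·O(x) = 0. -/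
import Mathlib


namespace Stmt17

/-- The quadratic form `Q(x) = x1² + x2² + x3² + x4²` on `ℂ⁴`. -/
noncomputable def Q4 : QuadraticForm ℂ (Fin 4 → ℂ) :=
  QuadraticMap.weightedSumSquares ℂ (fun _ : Fin 4 => (1 : ℂ))

/-- The Clifford algebra `𝒞` of `Q4`. -/
abbrev Cl := CliffordAlgebra Q4

/-- The canonical generators `e_j = ι(standard basis vector)` of `𝒞`. -/
noncomputable def eC (j : Fin 4) : Cl := CliffordAlgebra.ι Q4 (Pi.single j 1)

/-- `θ_a = (e_{2a−1} + i e_{2a})/2` for `a ∈ {1,2}` (0-indexed `a : Fin 2`). -/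
noncomputable def θ (a : Fin 2) : Cl :=
  (2 : ℂ)⁻¹ • (eC ⟨2 * a.val, by have := a.isLt; omega⟩
    + Complex.I • eC ⟨2 * a.val + 1, by have := a.isLt; omega⟩)

/-- `θ̄_a = (e_{2a−1} − i e_{2a})/2` for `a ∈ {1,2}` (0-indexed `a : Fin 2`). -/
noncomputable def θbar (a : Fin 2) : Cl :=
  (2 : ℂ)⁻¹ • (eC ⟨2 * a.val, by have := a.isLt; omega⟩
    - Complex.I • eC ⟨2 * a.val + 1, by have := a.isLt; omega⟩)

open scoped TensorProduct

/-- The reflection `s_p ∈ D_{2m1} ⊂ O(4)` acting on the first two coordinates. -/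
noncomputable def sMat (m1 : ℕ) (p : ℕ) : Matrix (Fin 4) (Fin 4) ℂ :=
  !![(Real.cos (2 * p * Real.pi / m1) : ℂ), (Real.sin (2 * p * Real.pi / m1) : ℂ), 0, 0;
     (Real.sin (2 * p * Real.pi / m1) : ℂ), -(Real.cos (2 * p * Real.pi / m1) : ℂ), 0, 0;
     0, 0, 1, 0;
     0, 0, 0, 1]

/-- The reflection `t_q ∈ D_{2m2} ⊂ O(4)` acting on the last two coordinates. -/
noncomputable def tMat (m2 : ℕ) (q : ℕ) : Matrix (Fin 4) (Fin 4) ℂ :=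
  !![1, 0, 0, 0;
     0, 1, 0, 0;
     0, 0, (Real.cos (2 * q * Real.pi / m2) : ℂ), (Real.sin (2 * q * Real.pi / m2) : ℂ);
     0, 0, (Real.sin (2 * q * Real.pi / m2) : ℂ), -(Real.cos (2 * q * Real.pi / m2) : ℂ)]

/-- The root `α_p = (sin(pπ/m1), −cos(pπ/m1), 0, 0)`. -/
noncomputable def αv (m1 : ℕ) (p : ℕ) : Fin 4 → ℂ :=
  ![(Real.sin (p * Real.pi / m1) : ℂ), -(Real.cos (p * Real.pi / m1) : ℂ), 0, 0]

/-- The root `β_q = (0, 0, sin(qπ/m2), −cos(qπ/m2))`. -/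
noncomputable def βv (m2 : ℕ) (q : ℕ) : Fin 4 → ℂ :=
  ![0, 0, (Real.sin (q * Real.pi / m2) : ℂ), -(Real.cos (q * Real.pi / m2) : ℂ)]

/-- The subgroup `W ⊆ GL₄(ℂ)` generated by the reflections `s_p` (`1 ≤ p ≤ m1`)
and `t_q` (`1 ≤ q ≤ m2`). -/
noncomputable def Wgrp (m1 m2 : ℕ) : Subgroup (GL (Fin 4) ℂ) :=
  Subgroup.closure {A : GL (Fin 4) ℂ |
    (∃ p, 1 ≤ p ∧ p ≤ m1 ∧ (A : Matrix (Fin 4) (Fin 4) ℂ) = sMat m1 p) ∨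
    (∃ q, 1 ≤ q ∧ q ≤ m2 ∧ (A : Matrix (Fin 4) (Fin 4) ℂ) = tMat m2 q)}

/-- The bilinear form `B(x,y) = Σ_j x_j y_j`. -/
noncomputable def Bform (x y : Fin 4 → ℂ) : ℂ := ∑ j, x j * y j

/-- The one-index symmetry
`O(x) = Σ_p κ_{α_p} B(x,α_p) (s_p ⊗ ι(α_p)) + Σ_q κ_{β_q} B(x,β_q) (t_q ⊗ ι(β_q))`
in `ℂ[W] ⊗ 𝒞`. -/
noncomputable def Osym (m1 m2 : ℕ) (κα κβ : ℕ → ℂ)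
    (s t : ℕ → (Wgrp m1 m2)) (x : Fin 4 → ℂ) :
    MonoidAlgebra ℂ (Wgrp m1 m2) ⊗[ℂ] Cl :=
  (∑ p ∈ Finset.Icc 1 m1, (κα p * Bform x (αv m1 p)) •
      (MonoidAlgebra.of ℂ (Wgrp m1 m2) (s p) ⊗ₜ[ℂ] CliffordAlgebra.ι Q4 (αv m1 p)))
  + ∑ q ∈ Finset.Icc 1 m2, (κβ q * Bform x (βv m2 q)) •
      (MonoidAlgebra.of ℂ (Wgrp m1 m2) (t q) ⊗ₜ[ℂ] CliffordAlgebra.ι Q4 (βv m2 q))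


lemma mem_span_pair' {x a b : Fin 4 → ℂ}
    (hx : x ∈ Submodule.span ℂ ({a, b} : Set (Fin 4 → ℂ))) :
    ∃ c d : ℂ, x = c • a + d • b := by
  rw [Submodule.mem_span_pair] at hx
  obtain ⟨c, d, h⟩ := hx
  exact ⟨c, d, h.symm⟩

lemma polar_zero (m1 m2 p q : ℕ) :
    QuadraticMap.polar Q4 (αv m1 p) (βv m2 q) = 0 := by
  simp [QuadraticMap.polar, Q4, QuadraticMap.weightedSumSquares_apply,
    Fin.sum_univ_four, αv, βv, smul_eq_mul]
  ring

lemma iota_anticomm (m1 m2 p q : ℕ) :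
    CliffordAlgebra.ι Q4 (αv m1 p) * CliffordAlgebra.ι Q4 (βv m2 q)
      + CliffordAlgebra.ι Q4 (βv m2 q) * CliffordAlgebra.ι Q4 (αv m1 p) = 0 := by
  rw [CliffordAlgebra.ι_mul_ι_add_swap, polar_zero, map_zero]

lemma sMat_mul_tMat (m1 m2 p q : ℕ) :
    sMat m1 p * tMat m2 q = tMat m2 q * sMat m1 p := by
  ext i j
  fin_cases i <;> fin_cases j <;>
    simp [sMat, tMat, Matrix.mul_apply, Fin.sum_univ_four, Matrix.vecHead, Matrix.vecTail]

/-- If `x` lies in the span of the first two standard basis vectors and `y` in the span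
of the last two, then `O(x) O(y) + O(y) O(x) = 0` in `ℂ[W] ⊗ 𝒞`. -/
theorem Osym_anticommute (m1 m2 : ℕ) (h1 : 1 ≤ m1) (h2 : 1 ≤ m2)
    (κ1 κ2 κ3 κ4 : ℂ) (κα κβ : ℕ → ℂ)
    (hκα : ∀ p : ℕ, κα p = if Odd m1 then κ1 else (if Odd p then κ1 else κ2))
    (hκβ : ∀ q : ℕ, κβ q = if Odd m2 then κ3 else (if Odd q then κ3 else κ4))
    (s t : ℕ → (Wgrp m1 m2))
    (hs : ∀ p, ((s p : GL (Fin 4) ℂ) : Matrix (Fin 4) (Fin 4) ℂ) = sMat m1 p)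
    (ht : ∀ q, ((t q : GL (Fin 4) ℂ) : Matrix (Fin 4) (Fin 4) ℂ) = tMat m2 q)
    (x y : Fin 4 → ℂ)
    (hx : x ∈ Submodule.span ℂ
      ({Pi.single (0 : Fin 4) (1 : ℂ), Pi.single (1 : Fin 4) (1 : ℂ)} : Set (Fin 4 → ℂ)))
    (hy : y ∈ Submodule.span ℂ
      ({Pi.single (2 : Fin 4) (1 : ℂ), Pi.single (3 : Fin 4) (1 : ℂ)} : Set (Fin 4 → ℂ))) :
    Osym m1 m2 κα κβ s t x * Osym m1 m2 κα κβ s t y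
      + Osym m1 m2 κα κβ s t y * Osym m1 m2 κα κβ s t x = 0 := by

  obtain ⟨c1, c2, hxe⟩ := mem_span_pair' hx
  obtain ⟨d1, d2, hye⟩ := mem_span_pair' hy
  have hx2 : x 2 = 0 := by subst hxe; simp [Pi.single_apply]
  have hx3 : x 3 = 0 := by subst hxe; simp [Pi.single_apply]
  have hy0 : y 0 = 0 := by subst hye; simp [Pi.single_apply]
  have hy1 : y 1 = 0 := by subst hye; simp [Pi.single_apply]
  have hBxβ : ∀ q, Bform x (βv m2 q) = 0 := by
    intro q; simp [Bform, βv, Fin.sum_univ_four, hx2, hx3]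
  have hByα : ∀ p, Bform y (αv m1 p) = 0 := by
    intro p; simp [Bform, αv, Fin.sum_univ_four, hy0, hy1]
  have hOx : Osym m1 m2 κα κβ s t x
      = ∑ p ∈ Finset.Icc 1 m1, (κα p * Bform x (αv m1 p)) •
          (MonoidAlgebra.of ℂ (Wgrp m1 m2) (s p) ⊗ₜ[ℂ] CliffordAlgebra.ι Q4 (αv m1 p)) := by
    have hz : (∑ q ∈ Finset.Icc 1 m2, (κβ q * Bform x (βv m2 q)) •
        (MonoidAlgebra.of ℂ (Wgrp m1 m2) (t q) ⊗ₜ[ℂ] CliffordAlgebra.ι Q4 (βv m2 q))) = 0 :=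
      Finset.sum_eq_zero fun q _ => by rw [hBxβ q, mul_zero, zero_smul]
    unfold Osym
    rw [hz, add_zero]
  have hOy : Osym m1 m2 κα κβ s t y
      = ∑ q ∈ Finset.Icc 1 m2, (κβ q * Bform y (βv m2 q)) •
          (MonoidAlgebra.of ℂ (Wgrp m1 m2) (t q) ⊗ₜ[ℂ] CliffordAlgebra.ι Q4 (βv m2 q)) := by
    have hz : (∑ p ∈ Finset.Icc 1 m1, (κα p * Bform y (αv m1 p)) •
        (MonoidAlgebra.of ℂ (Wgrp m1 m2) (s p) ⊗ₜ[ℂ] CliffordAlgebra.ι Q4 (αv m1 p))) = 0 :=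
      Finset.sum_eq_zero fun p _ => by rw [hByα p, mul_zero, zero_smul]
    unfold Osym
    rw [hz, zero_add]
  rw [hOx, hOy, Finset.sum_mul_sum, Finset.sum_mul_sum, Finset.sum_comm,
    ← Finset.sum_add_distrib]
  apply Finset.sum_eq_zero
  intro q _
  rw [← Finset.sum_add_distrib]
  apply Finset.sum_eq_zero
  intro p _
  have hcomm : s p * t q = t q * s p := by
    ext1
    ext1
    rw [Subgroup.coe_mul, Subgroup.coe_mul, Units.val_mul, Units.val_mul, hs, ht,
      sMat_mul_tMat]
  have hcomm2 : MonoidAlgebra.of ℂ (Wgrp m1 m2) (t q) * MonoidAlgebra.of ℂ (Wgrp m1 m2) (s p)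
      = MonoidAlgebra.of ℂ (Wgrp m1 m2) (s p) * MonoidAlgebra.of ℂ (Wgrp m1 m2) (t q) := by
    rw [← map_mul (MonoidAlgebra.of ℂ (Wgrp m1 m2)), ← map_mul (MonoidAlgebra.of ℂ (Wgrp m1 m2)),
      hcomm]
  rw [smul_mul_smul_comm, smul_mul_smul_comm, Algebra.TensorProduct.tmul_mul_tmul,
    Algebra.TensorProduct.tmul_mul_tmul, hcomm2,
    mul_comm (κβ q * Bform y (βv m2 q)) (κα p * Bform x (αv m1 p)), ← smul_add,
    ← TensorProduct.tmul_add, iota_anticomm, TensorProduct.tmul_zero, smul_zero]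

end Stmt17
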